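/- Query cost bounds for 2D point-query skyline discovery: Let s ≥ 0 and let x, y : Fin (s + 2) → ℕ with x strictly increasing, y strictly decreasing, x 0 = 0 and y (s + 1) = 0. Define C = Σ_{i=0}^{s} min( x (i+1) − x i , y i − y (i+1) ). Then for every index i ∈ Fin (s + 2), C ≤ x i + y i. In particular C ≤ x (s + 1) and C ≤ y 0. -/

import Mathlib

lemma pq2d_aux1 (X Y : ℕ → ℕ) (hX : Monotone X) :
    ∀ i, ∑ j ∈ Finset.range i, min (X (j+1) - X j) (Y j - Y (j+1)) ≤ X i - X 0 := by
  intro i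
  induction i with
  | zero => simp
  | succ n ih =>
    rw [Finset.sum_range_succ]
    have h1 : X 0 ≤ X n := hX (Nat.zero_le n)
    have h2 : X n ≤ X (n+1) := hX (Nat.le_succ n)
    have h3 : min (X (n+1) - X n) (Y n - Y (n+1)) ≤ X (n+1) - X n := min_le_left _ _
    omega

lemma pq2d_aux2 (X Y : ℕ → ℕ) (hY : Antitone Y) (i : ℕ) :
    ∀ n, ∑ j ∈ Finset.Ico i n, min (X (j+1) - X j) (Y j - Y (j+1)) ≤ Y i - Y n := by
  intro n
  induction n with
  | zero => simp
  | succ n ih =>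
    by_cases h : i ≤ n
    · rw [Finset.sum_Ico_succ_top h]
      have h1 : Y n ≤ Y i := hY h
      have h2 : Y (n+1) ≤ Y n := hY (Nat.le_succ n)
      have h3 : min (X (n+1) - X n) (Y n - Y (n+1)) ≤ Y n - Y (n+1) := min_le_right _ _
      omega
    · rw [Finset.Ico_eq_empty (by omega)]
      simp

/-- Query cost bounds for 2D point-query skyline discovery (PQ-2D-SKY):
given skyline points `(x i, y i)` sorted increasingly on `x` and decreasingly on `y`,
padded with corner points so that `x 0 = 0` and `y (s+1) = 0`, the cost
`C = ∑_{i=0}^{s} min(x(i+1) − x i, y i − y(i+1))` satisfies `C ≤ x i + y i` for every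
index `i`; in particular `C ≤ x (s+1)` and `C ≤ y 0`. -/
theorem pq2d_cost_bounds (s : ℕ) (x y : Fin (s + 2) → ℕ)
    (hx : StrictMono x) (hy : StrictAnti y)
    (hx0 : x 0 = 0) (hyl : y (Fin.last (s + 1)) = 0) :
    (∀ i : Fin (s + 2),
      (∑ j : Fin (s + 1), min (x j.succ - x j.castSucc) (y j.castSucc - y j.succ))
        ≤ x i + y i) ∧
    (∑ j : Fin (s + 1), min (x j.succ - x j.castSucc) (y j.castSucc - y j.succ))
      ≤ x (Fin.last (s + 1)) ∧
    (∑ j : Fin (s + 1), min (x j.succ - x j.castSucc) (y j.castSucc - y j.succ))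
      ≤ y 0 := by
  set X : ℕ → ℕ := fun j => x ⟨min j (s+1), by omega⟩ with hXdef
  set Y : ℕ → ℕ := fun j => y ⟨min j (s+1), by omega⟩ with hYdef
  have hXmono : Monotone X := by
    intro a b hab
    exact hx.monotone (by simp [Fin.le_def]; omega)
  have hYanti : Antitone Y := by
    intro a b hab
    exact hy.antitone (by simp [Fin.le_def]; omega)
  have hsum : (∑ j : Fin (s + 1), min (x j.succ - x j.castSucc) (y j.castSucc - y j.succ))
      = ∑ j ∈ Finset.range (s+1), min (X (j+1) - X j) (Y j - Y (j+1)) := by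
    rw [Finset.sum_range fun j => min (X (j+1) - X j) (Y j - Y (j+1))]
    apply Finset.sum_congr rfl
    intro j _
    have hj := j.isLt
    have e1 : X (j.val+1) = x j.succ := by
      simp only [hXdef]; congr 1; ext; simp only [Fin.val_succ]; omega
    have e2 : X j.val = x j.castSucc := by
      simp only [hXdef]; congr 1; ext; simp only [Fin.coe_castSucc]; omega
    have e3 : Y (j.val+1) = y j.succ := by
      simp only [hYdef]; congr 1; ext; simp only [Fin.val_succ]; omega
    have e4 : Y j.val = y j.castSucc := by
      simp only [hYdef]; congr 1; ext; simp only [Fin.coe_castSucc]; omega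
    rw [e1, e2, e3, e4]
  have key : ∀ i : Fin (s + 2),
      (∑ j : Fin (s + 1), min (x j.succ - x j.castSucc) (y j.castSucc - y j.succ))
        ≤ x i + y i := by
    intro i
    rw [hsum]
    have hi := i.isLt
    have hsplit := Finset.sum_range_add_sum_Ico
      (fun j => min (X (j+1) - X j) (Y j - Y (j+1))) (m := i.val) (n := s+1) (by omega)
    have h1 := pq2d_aux1 X Y hXmono i.val
    have h2 := pq2d_aux2 X Y hYanti i.val (s+1)
    have hXi : X i.val = x i := by simp [hXdef]; congr 1; ext; simp; omega
    have hYi : Y i.val = y i := by simp [hYdef]; congr 1; ext; simp; omega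
    have hX0 : X 0 = 0 := by
      simp only [hXdef]
      convert hx0 using 2
      ext; simp
    have hYl : Y (s+1) = 0 := by
      simp only [hYdef]
      convert hyl using 2
      simp [Fin.last]
    omega
  refine ⟨key, ?_, ?_⟩
  · have := key (Fin.last (s+1))
    omega
  · have := key 0
    omega
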